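/- Let C be a Noetherian commutative ring, A and B commutative C-algebras, M an A-module, and R = A ⊗_C B. If A and M are flat as C-modules, then Tor^R_i(M ⊗_A R, N ⊗_B R) = 0 for every B-module N and every integer i > 0. -/

import Mathlib

open scoped TensorProduct

open CategoryTheory

attribute [local instance] Algebra.TensorProduct.rightAlgebra

noncomputable section

universe u

namespace TorVanishingAux

variable (C : Type u) [CommRing C]
  (A : Type u) [CommRing A] [Algebra C A]
  (B : Type u) [CommRing B] [Algebra C B]

instance : SMulCommClass A B (A ⊗[C] B) :=
  ⟨fun a b x => by
    rw [Algebra.smul_def, Algebra.smul_def, Algebra.smul_def, Algebra.smul_def, mul_left_comm]⟩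

lemma right_smul_tmul (b : B) (a : A) (b₀ : B) :
    b • (a ⊗ₜ[C] b₀ : A ⊗[C] B) = a ⊗ₜ[C] (b * b₀) := by
  rw [Algebra.smul_def]
  show ((1 : A) ⊗ₜ[C] b) * (a ⊗ₜ[C] b₀) = _
  rw [Algebra.TensorProduct.tmul_mul_tmul, one_mul]

/-- `A ⊗[C] B` is `B`-linearly equivalent to `B ⊗[C] A`. -/
def commB : (A ⊗[C] B) ≃ₗ[B] B ⊗[C] A :=
  AddEquiv.toLinearEquiv ((Algebra.TensorProduct.comm C A B).toLinearEquiv.toAddEquiv)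
    (by
      intro b x
      induction x using TensorProduct.induction_on with
      | zero => simp
      | tmul a b₀ =>
        show (Algebra.TensorProduct.comm C A B) (b • (a ⊗ₜ[C] b₀)) =
          b • (Algebra.TensorProduct.comm C A B) (a ⊗ₜ[C] b₀)
        rw [right_smul_tmul, Algebra.TensorProduct.comm_tmul, Algebra.TensorProduct.comm_tmul,
          TensorProduct.smul_tmul', smul_eq_mul]
      | add x y hx hy => simp only [smul_add, map_add, hx, hy])

variable (M : Type u) [AddCommGroup M] [Module C M] [Module A M] [IsScalarTower C A M]

/-- `(A ⊗[C] B) ⊗[A] M` is `B`-linearly equivalent to `B ⊗[C] M`. -/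
def eX : ((A ⊗[C] B) ⊗[A] M) ≃ₗ[B] B ⊗[C] M :=
  AddEquiv.toLinearEquiv
    (((TensorProduct.comm A (A ⊗[C] B) M).toAddEquiv.trans
      (TensorProduct.AlgebraTensorModule.cancelBaseChange C A A M B).toAddEquiv).trans
      (TensorProduct.comm C M B).toAddEquiv)
    (by
      intro b x
      induction x using TensorProduct.induction_on with
      | zero => simp
      | tmul r m =>
        rw [TensorProduct.smul_tmul']
        induction r using TensorProduct.induction_on with
        | zero => simp [TensorProduct.zero_tmul]
        | tmul a b₀ =>
          rw [right_smul_tmul]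
          show (TensorProduct.comm C M B)
              ((TensorProduct.AlgebraTensorModule.cancelBaseChange C A A M B)
                ((TensorProduct.comm A (A ⊗[C] B) M) ((a ⊗ₜ[C] (b * b₀)) ⊗ₜ[A] m))) =
            b • (TensorProduct.comm C M B)
              ((TensorProduct.AlgebraTensorModule.cancelBaseChange C A A M B)
                ((TensorProduct.comm A (A ⊗[C] B) M) ((a ⊗ₜ[C] b₀) ⊗ₜ[A] m)))
          rw [TensorProduct.comm_tmul, TensorProduct.comm_tmul,
            TensorProduct.AlgebraTensorModule.cancelBaseChange_tmul,
            TensorProduct.AlgebraTensorModule.cancelBaseChange_tmul,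
            TensorProduct.comm_tmul, TensorProduct.comm_tmul,
            TensorProduct.smul_tmul', smul_eq_mul]
        | add r₁ r₂ h₁ h₂ =>
          rw [smul_add, TensorProduct.add_tmul, TensorProduct.add_tmul, map_add, map_add,
            smul_add, ← h₁, ← h₂]
      | add x y hx hy => simp only [smul_add, map_add, hx, hy])


/-- Extension of scalars along `B → A ⊗[C] B`. -/
def E : ModuleCat.{u} B ⥤ ModuleCat.{u} (A ⊗[C] B) where
  obj Q := ModuleCat.of _ ((A ⊗[C] B) ⊗[B] Q)
  map {Q₁ Q₂} l := ModuleCat.ofHom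
    (TensorProduct.AlgebraTensorModule.map (LinearMap.id : (A ⊗[C] B) →ₗ[A ⊗[C] B] (A ⊗[C] B)) l.hom)
  map_id Q := by
    apply ModuleCat.hom_ext; apply LinearMap.ext; intro x
    induction x using TensorProduct.induction_on with
    | zero => simp
    | tmul r q => rfl
    | add x y hx hy => simp_all
  map_comp f g := by
    apply ModuleCat.hom_ext; apply LinearMap.ext; intro x
    induction x using TensorProduct.induction_on with
    | zero => simp
    | tmul r q => rfl
    | add x y hx hy => simp_all

instance : (E C A B).Additive where
  map_add := by
    intros Q₁ Q₂ f g
    apply ModuleCat.hom_ext; apply LinearMap.ext; intro x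
    induction x using TensorProduct.induction_on with
    | zero => exact (map_zero _).trans (map_zero _).symm
    | tmul r q =>
        show r ⊗ₜ (f + g).hom q = (TensorProduct.AlgebraTensorModule.map LinearMap.id f.hom) (r ⊗ₜ q) +
          (TensorProduct.AlgebraTensorModule.map LinearMap.id g.hom) (r ⊗ₜ q)
        rw [show (f + g).hom q = f.hom q + g.hom q from rfl, TensorProduct.tmul_add]
        rfl
    | add x y hx hy => exact (map_add _ x y).trans ((congrArg₂ (· + ·) hx hy).trans (map_add _ x y).symm)

lemma E_map_coe {Q₁ Q₂ : ModuleCat.{u} B} (l : Q₁ ⟶ Q₂) :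
    ⇑((E C A B).map l) = ⇑(LinearMap.lTensor (A ⊗[C] B) (l.hom : Q₁ →ₗ[B] Q₂)) := by
  funext x
  induction x using TensorProduct.induction_on with
  | zero => exact (map_zero _).trans (map_zero _).symm
  | tmul r q => rfl
  | add x y hx hy => exact (map_add _ x y).trans ((congrArg₂ (· + ·) hx hy).trans (map_add _ x y).symm)

lemma E_exact [Module.Flat B (A ⊗[C] B)] (S : ShortComplex (ModuleCat.{u} B)) (hS : S.Exact) :
    (S.map (E C A B)).Exact := by
  rw [ShortComplex.ShortExact.moduleCat_exact_iff_function_exact] at hS ⊢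
  show Function.Exact ((E C A B).map S.f) ((E C A B).map S.g)
  rw [E_map_coe, E_map_coe]
  exact Module.Flat.lTensor_exact (A ⊗[C] B) hS

set_option maxSynthPendingDepth 2 in
lemma E_obj_projective (Q : ModuleCat.{u} B) [Projective Q] : Projective ((E C A B).obj Q) := by
  haveI : Module.Projective B Q :=
    (IsProjective.iff_projective (R := B) Q).mpr (inferInstance : Projective Q)
  exact (IsProjective.iff_projective (R := A ⊗[C] B) ((A ⊗[C] B) ⊗[B] Q)).mp
    (inferInstance : Module.Projective (A ⊗[C] B) ((A ⊗[C] B) ⊗[B] Q))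


set_option maxSynthPendingDepth 2 in
set_option synthInstance.maxHeartbeats 400000 in
set_option maxHeartbeats 800000 in
lemma square (M : Type u) [AddCommGroup M] [Module C M] [Module A M] [IsScalarTower C A M]
    {Q₁ Q₂ : ModuleCat.{u} B} (l : Q₁ ⟶ Q₂)
    (x : ((MonoidalCategory.tensoringLeft (ModuleCat.{u} (A ⊗[C] B))).obj
        (ModuleCat.of (A ⊗[C] B) ((A ⊗[C] B) ⊗[A] M))).obj ((E C A B).obj Q₁)) :
    (TensorProduct.AlgebraTensorModule.cancelBaseChange B (A ⊗[C] B) (A ⊗[C] B)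
        ((A ⊗[C] B) ⊗[A] M) Q₂)
      (((MonoidalCategory.tensoringLeft (ModuleCat.{u} (A ⊗[C] B))).obj
          (ModuleCat.of (A ⊗[C] B) ((A ⊗[C] B) ⊗[A] M))).map ((E C A B).map l) x) =
    (LinearMap.lTensor ((A ⊗[C] B) ⊗[A] M) (l.hom : Q₁ →ₗ[B] Q₂))
      ((TensorProduct.AlgebraTensorModule.cancelBaseChange B (A ⊗[C] B) (A ⊗[C] B)
        ((A ⊗[C] B) ⊗[A] M) Q₁) x) := by
  induction x using TensorProduct.induction_on with
  | zero => erw [map_zero]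
  | tmul v w =>
    induction w using TensorProduct.induction_on with
    | zero => erw [TensorProduct.tmul_zero, map_zero]
    | tmul r q =>
      have h1 : (((MonoidalCategory.tensoringLeft (ModuleCat.{u} (A ⊗[C] B))).obj
          (ModuleCat.of (A ⊗[C] B) ((A ⊗[C] B) ⊗[A] M))).map ((E C A B).map l))
          (v ⊗ₜ[A ⊗[C] B] (r ⊗ₜ[B] q)) = v ⊗ₜ[A ⊗[C] B] (r ⊗ₜ[B] (l q)) := rfl
      erw [h1, TensorProduct.AlgebraTensorModule.cancelBaseChange_tmul]
    | add w₁ w₂ h₁ h₂ =>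
      erw [TensorProduct.tmul_add, map_add, map_add, map_add, map_add, h₁, h₂]
  | add x y hx hy => erw [map_add, map_add, map_add, map_add, hx, hy]

/-- Base change of a projective resolution of `N` gives a projective resolution
of `(A ⊗[C] B) ⊗[B] N`. -/
def res [Module.Flat B (A ⊗[C] B)]
    (N : Type u) [AddCommGroup N] [Module B N]
    (Q : ProjectiveResolution (ModuleCat.of B N)) :
    ProjectiveResolution (ModuleCat.of (A ⊗[C] B) ((A ⊗[C] B) ⊗[B] N)) :=
  haveI hPH : (E C A B).PreservesHomology :=
    ((Functor.exact_tfae (E C A B)).out 1 2).mp (E_exact C A B)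
  { complex := (((E C A B).mapHomologicalComplex _).obj Q.complex)
    projective := fun n => E_obj_projective C A B _
    π := ((E C A B).mapHomologicalComplex _).map Q.π ≫
      (HomologicalComplex.singleMapHomologicalComplex (E C A B) (ComplexShape.down ℕ) 0).hom.app
        (ModuleCat.of B N)
    quasiIso := by
      refine quasiIso_comp _ _ (hφ := ?_) (hφ' := ?_)
      · infer_instance
      · have : IsIso ((HomologicalComplex.singleMapHomologicalComplex (E C A B) (ComplexShape.down ℕ) 0).hom.app (ModuleCat.of B N)) :=
          ((HomologicalComplex.singleMapHomologicalComplex (E C A B) (ComplexShape.down ℕ) 0).app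
            (ModuleCat.of B N)).isIso_hom
        exact @quasiIso_of_isIso _ _ _ _ _ _ _ _ this _ _ }

end TorVanishingAux

open TorVanishingAux

/-- Let `C` be Noetherian, `A`, `B` commutative `C`-algebras,
`M` an `A`-module and `R = A ⊗_C B`.  If `A` and `M` are flat over `C`, then
`Tor^R_i(M ⊗_A R, N ⊗_B R) = 0` for every `B`-module `N` and every `i > 0`. -/
theorem tor_baseChange_vanishing
    (C : Type u) [CommRing C] [IsNoetherianRing C]
    (A : Type u) [CommRing A] [Algebra C A]
    (B : Type u) [CommRing B] [Algebra C B]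
    (M : Type u) [AddCommGroup M] [Module C M] [Module A M] [IsScalarTower C A M]
    (hA : Module.Flat C A) (hM : Module.Flat C M)
    (N : Type u) [AddCommGroup N] [Module C N] [Module B N] [IsScalarTower C B N]
    (i : ℕ) (hi : 0 < i) :
    Limits.IsZero
      (((Tor (ModuleCat.{u} (A ⊗[C] B)) i).obj
          (ModuleCat.of (A ⊗[C] B) ((A ⊗[C] B) ⊗[A] M))).obj
        (ModuleCat.of (A ⊗[C] B) ((A ⊗[C] B) ⊗[B] N))) := by
  haveI := hA
  haveI := hM
  haveI hflatR : Module.Flat B (A ⊗[C] B) :=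
    Module.Flat.of_linearEquiv (commB C A B)
  haveI hflatX : Module.Flat B ((A ⊗[C] B) ⊗[A] M) :=
    Module.Flat.of_linearEquiv (eX C A B M)
  let Q : ProjectiveResolution (ModuleCat.of B N) := projectiveResolution (ModuleCat.of B N)
  let P : ProjectiveResolution (ModuleCat.of (A ⊗[C] B) ((A ⊗[C] B) ⊗[B] N)) := res C A B N Q
  let F := (MonoidalCategory.tensoringLeft (ModuleCat.{u} (A ⊗[C] B))).obj
      (ModuleCat.of (A ⊗[C] B) ((A ⊗[C] B) ⊗[A] M))
  refine Limits.IsZero.of_iso ?_ (P.isoLeftDerivedObj F i)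
  show Limits.IsZero (((F.mapHomologicalComplex (ComplexShape.down ℕ)).obj P.complex).homology i)
  rw [← HomologicalComplex.exactAt_iff_isZero_homology]
  obtain ⟨n, rfl⟩ : ∃ n, i = n + 1 := ⟨i - 1, by omega⟩
  rw [HomologicalComplex.exactAt_iff' _ (n + 2) (n + 1) n (by simp) (by simp)]
  rw [ShortComplex.ShortExact.moduleCat_exact_iff_function_exact]
  show Function.Exact (F.map ((E C A B).map (Q.complex.d (n+2) (n+1))))
      (F.map ((E C A B).map (Q.complex.d (n+1) n)))
  have hQex : Function.Exact (Q.complex.d (n+2) (n+1)) (Q.complex.d (n+1) n) :=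
    (ShortComplex.ShortExact.moduleCat_exact_iff_function_exact _).1 (Q.exact_succ n)
  have hXex := Module.Flat.lTensor_exact ((A ⊗[C] B) ⊗[A] M) hQex
  let e₁ := TensorProduct.AlgebraTensorModule.cancelBaseChange B (A ⊗[C] B) (A ⊗[C] B)
      ((A ⊗[C] B) ⊗[A] M) (Q.complex.X n)
  let e₂ := TensorProduct.AlgebraTensorModule.cancelBaseChange B (A ⊗[C] B) (A ⊗[C] B)
      ((A ⊗[C] B) ⊗[A] M) (Q.complex.X (n+1))
  let e₃ := TensorProduct.AlgebraTensorModule.cancelBaseChange B (A ⊗[C] B) (A ⊗[C] B)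
      ((A ⊗[C] B) ⊗[A] M) (Q.complex.X (n+2))
  intro x
  simp only [Set.mem_range]
  constructor
  · intro hx
    have h0 : (LinearMap.lTensor ((A ⊗[C] B) ⊗[A] M) (((Q.complex.d (n+1) n).hom : _ →ₗ[B] _))) (e₂ x)
        = 0 := by
      erw [← square C A B M (Q.complex.d (n+1) n) x, hx, map_zero]
    obtain ⟨v, hv⟩ := (hXex (e₂ x)).1 h0
    refine ⟨e₃.symm v, e₂.injective ?_⟩
    erw [square C A B M (Q.complex.d (n+2) (n+1)) _, LinearEquiv.apply_symm_apply, hv]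
  · rintro ⟨v, rfl⟩
    apply e₁.injective
    erw [square C A B M (Q.complex.d (n+1) n) _, square C A B M (Q.complex.d (n+2) (n+1)) v,
      map_zero]
    exact hXex.apply_apply_eq_zero _

end
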